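/- Let m be a nonnegative integer and k = 4m+3. Suppose x, y, z are nonnegative integers with x ⊕ y ⊕ z ≠ 0 and y ≤ ⌊(x+z)/k⌋. Then at least one of the following holds: (i) x ⊕ y ⊕ w = 0 for some nonnegative integer w with w < z and y ≤ ⌊(x+w)/k⌋; (ii) x ⊕ v ⊕ z = 0 for some nonnegative integer v with v < y ≤ ⌊(x+z)/k⌋; (iii) u ⊕ y ⊕ z = 0 for some nonnegative integer u with u < x and y ≤ ⌊(u+z)/k⌋; (iv) x ⊕ v ⊕ w = 0 for some nonnegative integers v, w with v < y, w < z and v = ⌊(x+w)/k⌋; (v) u ⊕ v ⊕ z = 0 for some nonnegative integers u, v with u < x, v < y and v = ⌊(u+z)/k⌋. -/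

import Mathlib

private lemma xor_add_two_mul_and (a b : ℕ) : (a ^^^ b) + 2 * (a &&& b) = a + b := by
  induction a using Nat.strong_induction_on generalizing b with
  | _ a ih =>
    rcases Nat.eq_zero_or_pos a with ha | ha
    · simp [ha]
    · have ih2 := ih (a / 2) (Nat.div_lt_self ha (by norm_num)) (b / 2)
      have h1 : (a ^^^ b) / 2 = a / 2 ^^^ b / 2 := Nat.xor_div_two
      have h2 : (a &&& b) / 2 = a / 2 &&& b / 2 := Nat.and_div_two
      have h3 : ((a ^^^ b) % 2 = 1) ↔ ¬ ((a % 2 = 1) ↔ (b % 2 = 1)) := Nat.xor_mod_two_eq_one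
      have h4 : ((a &&& b) % 2 = 1) ↔ (a % 2 = 1 ∧ b % 2 = 1) := Nat.and_mod_two_eq_one
      omega

private lemma L2 (q : ℕ) : ∀ t a : ℕ, a - (a &&& (t+1)) < q * (t+1) → a - (a &&& t) ≤ q * (t+1) := by
  intro t
  induction t using Nat.strong_induction_on with
  | _ t ih =>
    intro a h
    have hle1 : a &&& t ≤ a := Nat.and_le_left
    have hle2 : a &&& (t+1) ≤ a := Nat.and_le_left
    have e1 : (a &&& t) / 2 = a / 2 &&& t / 2 := Nat.and_div_two
    have e2 : (a &&& (t+1)) / 2 = a / 2 &&& (t+1) / 2 := Nat.and_div_two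
    have e3 : ((a &&& t) % 2 = 1) ↔ (a % 2 = 1 ∧ t % 2 = 1) := Nat.and_mod_two_eq_one
    have e4 : ((a &&& (t+1)) % 2 = 1) ↔ (a % 2 = 1 ∧ (t+1) % 2 = 1) := Nat.and_mod_two_eq_one
    rcases Nat.even_or_odd t with he | ho
    · -- t even : a &&& (t+1) = a &&& t + a % 2, conclude directly
      have ht2 : t % 2 = 0 := Nat.even_iff.mp he
      have htt : (t+1) / 2 = t / 2 := by omega
      rw [htt] at e2
      omega
    · -- t odd : t = 2s+1
      have ht2 : t % 2 = 1 := Nat.odd_iff.mp ho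
      obtain ⟨s, hs⟩ : ∃ s, t = 2 * s + 1 := ⟨t / 2, by omega⟩
      have hlt : s < t := by omega
      have hqq : q * (t + 1) = 2 * (q * (s + 1)) := by rw [hs]; ring
      have hd1 : t / 2 = s := by omega
      have hd2 : (t + 1) / 2 = s + 1 := by omega
      rw [hd1] at e1; rw [hd2] at e2
      have hle3 : a / 2 &&& (s+1) ≤ a / 2 := Nat.and_le_left
      have hle4 : a / 2 &&& s ≤ a / 2 := Nat.and_le_left
      have hpre : a / 2 - (a / 2 &&& (s + 1)) < q * (s + 1) := by omega
      have := ih s hlt (a / 2) hpre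
      omega

private lemma key (q a t : ℕ) (ht : a - (a &&& t) < q * t) :
    ∃ v < t, q * v ≤ a - (a &&& v) ∧ a - (a &&& v) ≤ q * (v + 1) := by
  classical
  have hex : ∃ n, a - (a &&& n) < q * n := ⟨t, ht⟩
  set t0 := Nat.find hex with ht0
  have hspec : a - (a &&& t0) < q * t0 := Nat.find_spec hex
  have ht0t : t0 ≤ t := Nat.find_min' hex ht
  have ht0pos : 0 < t0 := by
    rcases Nat.eq_zero_or_pos t0 with h | h
    · rw [h] at hspec; omega
    · exact h
  refine ⟨t0 - 1, by omega, ?_, ?_⟩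
  · have := Nat.find_min hex (m := t0 - 1) (by omega)
    omega
  · have h1 : a - (a &&& (t0 - 1 + 1)) < q * (t0 - 1 + 1) := by
      have : t0 - 1 + 1 = t0 := by omega
      rw [this]; exact hspec
    exact L2 q (t0 - 1) a h1

theorem stmt13 (m k : ℕ) (hk : k = 4 * m + 3) (x y z : ℕ)
    (h0 : x ^^^ y ^^^ z ≠ 0) (h1 : y ≤ (x + z) / k) :
    (∃ w : ℕ, w < z ∧ x ^^^ y ^^^ w = 0 ∧ y ≤ (x + w) / k) ∨
    (∃ v : ℕ, v < y ∧ x ^^^ v ^^^ z = 0) ∨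
    (∃ u : ℕ, u < x ∧ u ^^^ y ^^^ z = 0 ∧ y ≤ (u + z) / k) ∨
    (∃ v w : ℕ, v < y ∧ w < z ∧ v = (x + w) / k ∧ x ^^^ v ^^^ w = 0) ∨
    (∃ u v : ℕ, u < x ∧ v < y ∧ v = (u + z) / k ∧ u ^^^ v ^^^ z = 0) := by
  have hk0 : 0 < k := by omega
  set q : ℕ := 2 * m + 1 with hq
  have hkq : k = 2 * q + 1 := by omega
  have hky : y * k ≤ x + z := (Nat.le_div_iff_mul_le hk0).mp h1
  rcases Nat.xor_trichotomy h0 with hx | hy | hz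
  · -- y ^^^ z < x
    by_cases hcase : y ≤ ((y ^^^ z) + z) / k
    · refine Or.inr (Or.inr (Or.inl ⟨y ^^^ z, hx, ?_, hcase⟩))
      simp [Nat.xor_assoc, Nat.xor_comm, Nat.xor_self]
    · have hlt : (y ^^^ z) + z < y * k := by
        have := (Nat.div_lt_iff_lt_mul hk0).mp (Nat.lt_of_not_le hcase)
        omega
      have hb : (z ^^^ y) + 2 * (z &&& y) = z + y := xor_add_two_mul_and z y
      have hxy : y ^^^ z = z ^^^ y := Nat.xor_comm y z
      have hland : z &&& y ≤ z := Nat.and_le_left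
      have hyk : y * k = 2 * (q * y) + y := by rw [hkq]; ring
      have hbad : z - (z &&& y) < q * y := by omega
      obtain ⟨v, hvy, hlo, hhi⟩ := key q z y hbad
      have hbv : (z ^^^ v) + 2 * (z &&& v) = z + v := xor_add_two_mul_and z v
      have hlandv : z &&& v ≤ z := Nat.and_le_left
      have hvk1 : v * k = 2 * (q * v) + v := by rw [hkq]; ring
      have hvk2 : (v + 1) * k = 2 * (q * (v + 1)) + (v + 1) := by rw [hkq]; ring
      have hrange1 : v * k ≤ (z ^^^ v) + z := by omega
      have hrange2 : (z ^^^ v) + z < (v + 1) * k := by omega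
      have hux : (z ^^^ v) < x := by
        have : (v + 1) * k ≤ y * k := Nat.mul_le_mul_right k (by omega)
        omega
      refine Or.inr (Or.inr (Or.inr (Or.inr ⟨z ^^^ v, v, hux, hvy, ?_, ?_⟩)))
      · exact (Nat.div_eq_of_lt_le hrange1 hrange2).symm
      · simp only [Nat.xor_assoc]
        rw [xor_cancel_left, Nat.xor_self]
  · -- z ^^^ x < y
    refine Or.inr (Or.inl ⟨x ^^^ z, by rwa [Nat.xor_comm x z], ?_⟩)
    simp [Nat.xor_assoc, Nat.xor_self]
  · -- x ^^^ y < z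
    by_cases hcase : y ≤ (x + (x ^^^ y)) / k
    · refine Or.inl ⟨x ^^^ y, hz, ?_, hcase⟩
      simp [Nat.xor_assoc, Nat.xor_self]
    · have hlt : x + (x ^^^ y) < y * k := by
        have := (Nat.div_lt_iff_lt_mul hk0).mp (Nat.lt_of_not_le hcase)
        omega
      have hb : (x ^^^ y) + 2 * (x &&& y) = x + y := xor_add_two_mul_and x y
      have hland : x &&& y ≤ x := Nat.and_le_left
      have hyk : y * k = 2 * (q * y) + y := by rw [hkq]; ring
      have hbad : x - (x &&& y) < q * y := by omega
      obtain ⟨v, hvy, hlo, hhi⟩ := key q x y hbad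
      have hbv : (x ^^^ v) + 2 * (x &&& v) = x + v := xor_add_two_mul_and x v
      have hlandv : x &&& v ≤ x := Nat.and_le_left
      have hvk1 : v * k = 2 * (q * v) + v := by rw [hkq]; ring
      have hvk2 : (v + 1) * k = 2 * (q * (v + 1)) + (v + 1) := by rw [hkq]; ring
      have hrange1 : v * k ≤ x + (x ^^^ v) := by omega
      have hrange2 : x + (x ^^^ v) < (v + 1) * k := by omega
      have hwz : (x ^^^ v) < z := by
        have : (v + 1) * k ≤ y * k := Nat.mul_le_mul_right k (by omega)
        omega
      refine Or.inr (Or.inr (Or.inr (Or.inl ⟨v, x ^^^ v, hvy, hwz, ?_, ?_⟩)))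
      · exact (Nat.div_eq_of_lt_le hrange1 hrange2).symm
      · simp [Nat.xor_assoc, Nat.xor_self]
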